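/- Let l ≥ 0, d ≥ 1, let K be a field of characteristic 2, and let ε = p_0…p_{l−1}(e_0…e_{d−1})^∞ be an ultimately periodic sequence with values in K. Let F := Σ_{m≥0} s_m z^m ∈ K[[z]], where s_m = ε_{ν₂(m+1)}, and let F₀ ∈ K[[z]] be the power series whose coefficient at z^m is 1 if ν₂(m+1) ≥ l and ν₂(m+1) ≡ l (mod d), and 0 otherwise. Then (1 + z^{2^l}) · F = Σ_{k=0}^{2^l − 2} s_k z^k + (1 + z^{2^l}) · Σ_{n=0}^{d−1} e_n z^{2^n − 1} F₀^{2^n}. -/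

import Mathlib

open PowerSeries Finset

private lemma sum_swap_zero {K : Type} [Field K] [CharP K 2] (f : ℕ → K) (s : Finset (ℕ × ℕ))
    (hs : ∀ p ∈ s, Prod.swap p ∈ s) (hd : ∀ p ∈ s, p.1 ≠ p.2) :
    ∑ p ∈ s, f p.1 * f p.2 = 0 := by
  refine Finset.sum_involution (fun p _ => Prod.swap p) (fun a ha => ?_)
    (fun a ha _ h => ?_) hs (fun a ha => rfl)
  · rw [Prod.fst_swap, Prod.snd_swap, mul_comm]
    exact CharTwo.add_self_eq_zero _
  · exact hd a ha ((Prod.ext_iff.mp h).2)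

private lemma char2_sq_coeff {K : Type} [Field K] [CharP K 2] (f : PowerSeries K) (m : ℕ) :
    (PowerSeries.coeff m) (f ^ 2) =
      if 2 ∣ m then ((PowerSeries.coeff (m / 2)) f) ^ 2 else 0 := by
  rw [sq, PowerSeries.coeff_mul]
  by_cases hm : 2 ∣ m
  · obtain ⟨k, rfl⟩ := hm
    rw [if_pos (dvd_mul_right 2 k)]
    have hkk : ((k, k) : ℕ × ℕ) ∈ Finset.HasAntidiagonal.antidiagonal (2 * k) := by
      simp [two_mul]
    rw [← Finset.add_sum_erase _ _ hkk]
    have h0 : ∑ p ∈ (Finset.HasAntidiagonal.antidiagonal (2 * k)).erase (k, k),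
        (fun i => (PowerSeries.coeff i) f) p.1 * (fun i => (PowerSeries.coeff i) f) p.2
          = 0 := by
      refine sum_swap_zero (K := K) (fun i => (PowerSeries.coeff i) f) _ (fun p hp => ?_) (fun p hp => ?_)
      · simp only [Finset.mem_erase, Finset.HasAntidiagonal.mem_antidiagonal] at hp ⊢
        refine ⟨fun h => hp.1 ?_, by simpa [add_comm] using hp.2⟩
        have h1 := (Prod.ext_iff.mp h).1
        have h2 := (Prod.ext_iff.mp h).2
        simp only [Prod.fst_swap, Prod.snd_swap] at h1 h2
        have hp2 := hp.2
        exact Prod.ext_iff.mpr ⟨by omega, by omega⟩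
      · simp only [Finset.mem_erase, Finset.HasAntidiagonal.mem_antidiagonal] at hp
        intro h
        exact hp.1 (Prod.ext_iff.mpr ⟨by omega, by omega⟩)
    simp only at h0
    rw [h0, add_zero, Nat.mul_div_cancel_left k (by norm_num), sq]
  · rw [if_neg hm]
    have h0 : ∑ p ∈ Finset.HasAntidiagonal.antidiagonal m,
        (fun i => (PowerSeries.coeff i) f) p.1 * (fun i => (PowerSeries.coeff i) f) p.2
          = 0 := by
      refine sum_swap_zero (K := K) (fun i => (PowerSeries.coeff i) f) _ (fun p hp => ?_) (fun p hp => ?_)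
      · simpa [add_comm] using hp
      · simp only [Finset.HasAntidiagonal.mem_antidiagonal] at hp
        intro h; exact hm ⟨p.1, by omega⟩
    simpa using h0

private lemma val_two_le_iff (l m : ℕ) : l ≤ padicValNat 2 (m + 1) ↔ 2 ^ l ∣ (m + 1) :=
  (padicValNat_dvd_iff_le (by omega)).symm

private lemma val_succ_double (k : ℕ) :
    padicValNat 2 (2 * k + 1 + 1) = padicValNat 2 (k + 1) + 1 := by
  have : 2 * k + 1 + 1 = 2 * (k + 1) := by ring
  rw [this, padicValNat.mul (by norm_num) (by omega), padicValNat_self, add_comm]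

/-- Coefficients of `X^(2^n-1) * F₀^(2^n)`. -/
private lemma coeff_G {K : Type} [Field K] [CharP K 2] (l d n m : ℕ) :
    (PowerSeries.coeff m) ((PowerSeries.X : PowerSeries K) ^ (2 ^ n - 1) *
      (PowerSeries.mk fun q : ℕ =>
        if l ≤ padicValNat 2 (q + 1) ∧ padicValNat 2 (q + 1) % d = l % d
        then (1 : K) else 0) ^ 2 ^ n) =
    if n ≤ padicValNat 2 (m + 1) ∧ l ≤ padicValNat 2 (m + 1) - n ∧
        (padicValNat 2 (m + 1) - n) % d = l % d
    then 1 else 0 := by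
  induction n generalizing m with
  | zero =>
    simp only [pow_zero, pow_one, Nat.sub_self, one_mul, PowerSeries.coeff_mk,
      Nat.zero_le, true_and, Nat.sub_zero]
  | succ n ih =>
    set F₀ : PowerSeries K := PowerSeries.mk fun q : ℕ =>
        if l ≤ padicValNat 2 (q + 1) ∧ padicValNat 2 (q + 1) % d = l % d
        then (1 : K) else 0 with hF₀def
    have h2n : 1 ≤ 2 ^ n := Nat.one_le_two_pow
    have hp2 : 2 ^ (n + 1) = 2 ^ n + 2 ^ n := by rw [pow_succ]; ring
    have key : (PowerSeries.X : PowerSeries K) ^ (2 ^ (n + 1) - 1) * F₀ ^ 2 ^ (n + 1) =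
        PowerSeries.X ^ 1 * ((PowerSeries.X : PowerSeries K) ^ (2 ^ n - 1) * F₀ ^ 2 ^ n) ^ 2 := by
      have e1 : 2 ^ (n + 1) - 1 = 1 + ((2 ^ n - 1) + (2 ^ n - 1)) := by omega
      rw [e1, hp2, pow_add, pow_add, pow_add, sq]
      ring
    rw [key, PowerSeries.coeff_X_pow_mul']
    by_cases h1 : 1 ≤ m
    · rw [if_pos h1, char2_sq_coeff]
      by_cases h2 : 2 ∣ (m - 1)
      · rw [if_pos h2, ih]
        have hsq : ∀ (c : Prop) [Decidable c], (if c then (1:K) else 0) ^ 2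
            = if c then 1 else 0 := by
          intro c hc; split_ifs <;> norm_num
        rw [hsq]
        have hmodd : m = 2 * ((m - 1) / 2) + 1 := by omega
        have hval : padicValNat 2 (m + 1) = padicValNat 2 ((m - 1) / 2 + 1) + 1 := by
          conv_lhs => rw [hmodd]
          exact val_succ_double _
        refine if_congr ?_ rfl rfl
        rw [hval]
        have hsub : padicValNat 2 ((m - 1) / 2 + 1) + 1 - (n + 1)
            = padicValNat 2 ((m - 1) / 2 + 1) - n := by omega
        rw [hsub]
        constructor
        · rintro ⟨a, b, c⟩; exact ⟨by omega, b, c⟩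
        · rintro ⟨a, b, c⟩; exact ⟨by omega, b, c⟩
      · rw [if_neg h2]
        have hm0 : padicValNat 2 (m + 1) = 0 := by
          rw [padicValNat.eq_zero_iff]
          right; right
          omega
        rw [if_neg]
        rw [hm0]
        rintro ⟨a, -, -⟩
        omega
    · rw [if_neg h1]
      have hm : m = 0 := by omega
      subst hm
      rw [if_neg]
      rintro ⟨a, -, -⟩
      simp [padicValNat.one] at a

private lemma val_sub_pow_lt {l m : ℕ} (hm : 2 ^ l ≤ m) (h : padicValNat 2 (m + 1) < l) :
    padicValNat 2 (m - 2 ^ l + 1) = padicValNat 2 (m + 1) := by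
  set w := padicValNat 2 (m + 1) with hw
  have h1 : 2 ^ w ∣ m + 1 := pow_padicValNat_dvd
  have h2 : ¬ 2 ^ (w + 1) ∣ m + 1 := pow_succ_padicValNat_not_dvd (by omega)
  have hd1 : 2 ^ w ∣ 2 ^ l := pow_dvd_pow 2 (le_of_lt h)
  have hd2 : 2 ^ (w + 1) ∣ 2 ^ l := pow_dvd_pow 2 h
  have hm1 : m - 2 ^ l + 1 = m + 1 - 2 ^ l := by omega
  have h3 : 2 ^ w ∣ m - 2 ^ l + 1 := by rw [hm1]; exact Nat.dvd_sub h1 hd1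
  have h4 : ¬ 2 ^ (w + 1) ∣ m - 2 ^ l + 1 := by
    intro hc
    apply h2
    have he : m + 1 = (m - 2 ^ l + 1) + 2 ^ l := by omega
    rw [he]; exact Nat.dvd_add hc hd2
  have hle : w ≤ padicValNat 2 (m - 2 ^ l + 1) := (val_two_le_iff w _).mpr h3
  have hlt : ¬ (w + 1 ≤ padicValNat 2 (m - 2 ^ l + 1)) := fun hc =>
    h4 ((val_two_le_iff (w + 1) _).mp hc)
  omega

private lemma val_sub_pow_ge {l m : ℕ} (hm : 2 ^ l ≤ m) (h : l ≤ padicValNat 2 (m + 1)) :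
    l ≤ padicValNat 2 (m - 2 ^ l + 1) := by
  have h1 : 2 ^ l ∣ m + 1 := (val_two_le_iff l m).mp h
  have hm1 : m - 2 ^ l + 1 = m + 1 - 2 ^ l := by omega
  refine (val_two_le_iff l _).mpr ?_
  rw [hm1]
  exact Nat.dvd_sub h1 dvd_rfl


/-- For an ultimately periodic sequence
`ε = p₀…p_{l−1}(e₀…e_{d−1})^∞` with values in a field `K` of characteristic 2,
with `F = Σ s_m z^m`, `s_m = ε_{ν₂(m+1)}`, and `F₀` the 0/1-series supported on
`{m : ν₂(m+1) ≥ l and ν₂(m+1) ≡ l (mod d)}`, one has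
`(1+z^{2^l})·F = Σ_{k=0}^{2^l−2} s_k z^k + (1+z^{2^l})·Σ_{n=0}^{d−1} e_n z^{2^n−1} F₀^{2^n}`. -/
theorem stmt8 (K : Type) [Field K] [CharP K 2] (l d : ℕ) (hd : 1 ≤ d)
    (p : Fin l → K) (e : Fin d → K) (ε : ℕ → K)
    (hεp : ∀ n (h : n < l), ε n = p ⟨n, h⟩)
    (hεe : ∀ j (hj : j < d), ∀ k : ℕ, ε (l + j + k * d) = e ⟨j, hj⟩)
    (F F₀ : PowerSeries K)
    (hF : F = PowerSeries.mk fun m => ε (padicValNat 2 (m + 1)))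
    (hF₀ : F₀ = PowerSeries.mk fun m =>
      if l ≤ padicValNat 2 (m + 1) ∧ padicValNat 2 (m + 1) % d = l % d
      then (1 : K) else 0) :
    (1 + PowerSeries.X ^ 2 ^ l) * F =
      (∑ k ∈ Finset.range (2 ^ l - 1),
        PowerSeries.C (ε (padicValNat 2 (k + 1))) * PowerSeries.X ^ k) +
      (1 + PowerSeries.X ^ 2 ^ l) *
        ∑ n : Fin d,
          PowerSeries.C (e n) * PowerSeries.X ^ (2 ^ (n : ℕ) - 1) * F₀ ^ 2 ^ (n : ℕ) := by
  have hGsum : (∑ n : Fin d,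
      PowerSeries.C (e n) * PowerSeries.X ^ (2 ^ (n : ℕ) - 1) * F₀ ^ 2 ^ (n : ℕ))
      = PowerSeries.mk (fun m => if l ≤ padicValNat 2 (m + 1)
          then ε (padicValNat 2 (m + 1)) else 0) := by
    ext m
    rw [map_sum, PowerSeries.coeff_mk]
    have hterm : ∀ n : Fin d, (PowerSeries.coeff m)
        (PowerSeries.C (e n) * PowerSeries.X ^ (2 ^ (n : ℕ) - 1) * F₀ ^ 2 ^ (n : ℕ))
        = e n * (if (n : ℕ) ≤ padicValNat 2 (m + 1) ∧ l ≤ padicValNat 2 (m + 1) - (n : ℕ) ∧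
            (padicValNat 2 (m + 1) - (n : ℕ)) % d = l % d then 1 else 0) := by
      intro n
      rw [mul_assoc, PowerSeries.coeff_C_mul, hF₀, coeff_G]
    simp only [hterm]
    set v := padicValNat 2 (m + 1) with hv
    by_cases hlv : l ≤ v
    · rw [if_pos hlv]
      have hdm := Nat.div_add_mod (v - l) d
      have hml : (v - l) % d ≤ v - l := Nat.mod_le _ _
      have hmlt : (v - l) % d < d := Nat.mod_lt _ (by omega)
      obtain ⟨q, hq⟩ : ∃ q, d * q + (v - l) % d = v - l := ⟨(v - l) / d, hdm⟩
      have hq' : q * d = d * q := Nat.mul_comm _ _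
      rw [Finset.sum_eq_single (⟨(v - l) % d, hmlt⟩ : Fin d)]
      · rw [if_pos, mul_one]
        · have hvz : v = l + (v - l) % d + q * d := by omega
          conv_rhs => rw [hvz]
          exact (hεe _ hmlt q).symm
        · show (v - l) % d ≤ v ∧ l ≤ v - (v - l) % d ∧ (v - (v - l) % d) % d = l % d
          refine ⟨by omega, by omega, ?_⟩
          have h1 : v - (v - l) % d = l + d * q := by omega
          rw [h1, Nat.add_mul_mod_self_left]
      · intro b _ hb
        rw [if_neg, mul_zero]
        rintro ⟨a1, a2, a3⟩
        apply hb
        have hbd : (b : ℕ) < d := b.2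
        have hdvd : d ∣ (v - (b : ℕ) - l) :=
          (Nat.modEq_iff_dvd' a2).mp (Nat.ModEq.symm a3)
        obtain ⟨k, hk⟩ := hdvd
        have hsplit : v - l = d * k + (b : ℕ) := by omega
        have : (v - l) % d = (b : ℕ) := by
          rw [hsplit, Nat.mul_add_mod, Nat.mod_eq_of_lt hbd]
        exact Fin.ext this.symm
      · intro h; exact absurd (Finset.mem_univ _) h
    · rw [if_neg hlv]
      apply Finset.sum_eq_zero
      intro b _
      rw [if_neg, mul_zero]
      rintro ⟨a1, a2, -⟩
      omega
  rw [hGsum, hF]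
  ext m
  simp only [add_mul, one_mul, map_add, PowerSeries.coeff_X_pow_mul', PowerSeries.coeff_mk,
    map_sum, PowerSeries.coeff_C_mul, PowerSeries.coeff_X_pow, mul_ite, mul_one, mul_zero,
    Finset.sum_ite_eq, Finset.mem_range]
  have h2l : 1 ≤ 2 ^ l := Nat.one_le_two_pow
  by_cases h1 : 2 ^ l ≤ m
  · have hnr : ¬ m < 2 ^ l - 1 := by omega
    rw [if_pos h1, if_pos h1, if_neg hnr, zero_add]
    by_cases h2 : l ≤ padicValNat 2 (m + 1)
    · rw [if_pos h2, if_pos (val_sub_pow_ge h1 h2)]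
    · rw [val_sub_pow_lt h1 (lt_of_not_ge h2), if_neg h2]
      simp [CharTwo.add_self_eq_zero]
  · rw [if_neg h1, if_neg h1, add_zero, add_zero]
    by_cases h3 : m < 2 ^ l - 1
    · have hniv : ¬ l ≤ padicValNat 2 (m + 1) := fun hc =>
        absurd (Nat.le_of_dvd (by omega) ((val_two_le_iff l m).mp hc)) (by omega)
      rw [if_pos h3, if_neg hniv, add_zero]
    · have hlev : l ≤ padicValNat 2 (m + 1) :=
        (val_two_le_iff l m).mpr ⟨1, by omega⟩
      rw [if_neg h3, if_pos hlev, zero_add]
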